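/- arXiv:1710.00083 — 2 statements merged into one kernel-verified Lean document; each statement's English description precedes it below -/
import Mathlib

section
/- A threshold graph T(σ) on n vertices with e edges is isomorphic to the colex graph C(n,e) if and only if at most one 0 appears to the right of the leftmost 1 in the code σ (where the rightmost digit of σ may be interpreted as either 0 or 1). -/
/-!
Common definitions: threshold graphs from binary codes, counts of matchings and
independent sets, lex and colex graphs, and almost alternating codes.

A binary code is a `List Bool` whose head is the *leftmost* (most significant,
last added) digit; `true` stands for the digit `1` and `false` for `0`.
Reading the code from right to left, each digit adds a vertex: a `1` adds a
dominating vertex and a `0` adds an isolated vertex.  Equivalently, the vertex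
at position `i` (from the left) is adjacent to every vertex to its right iff
its digit is `1`.  Note that the value of the rightmost digit (the star) never
affects the graph.
-/

/-- The threshold graph encoded by a binary code `σ`. -/
def threshOf (σ : List Bool) : SimpleGraph (Fin σ.length) where
  Adj i j := i ≠ j ∧ σ.get (min i j) = true
  symm := by
    constructor
    intro i j h
    refine ⟨h.1.symm, ?_⟩
    rw [min_comm]
    exact h.2
  loopless := by
    constructor
    intro i h
    exact h.1 rfl

/-- The number of edges of a graph. -/
noncomputable def edgeCount {V : Type*} (G : SimpleGraph V) : ℕ := Nat.card G.edgeSet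

/-- `M` is a matching of `G`: a set of pairwise disjoint edges of `G`. -/
def IsMatchingSet {V : Type*} (G : SimpleGraph V) (M : Finset (Sym2 V)) : Prop :=
  (∀ e ∈ M, e ∈ G.edgeSet) ∧ ∀ e ∈ M, ∀ f ∈ M, e ≠ f → ∀ v : V, v ∈ e → v ∉ f

/-- `m(G)`: the total number of matchings of `G` (including the empty matching). -/
noncomputable def matchCount {V : Type*} (G : SimpleGraph V) : ℕ :=
  Nat.card {M : Finset (Sym2 V) // IsMatchingSet G M}

/-- `m_k(G)`: the number of matchings of `G` of size `k`. -/
noncomputable def matchCountK {V : Type*} (G : SimpleGraph V) (k : ℕ) : ℕ :=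
  Nat.card {M : Finset (Sym2 V) // IsMatchingSet G M ∧ M.card = k}

/-- `i(G)`: the number of independent sets of `G` (including the empty set). -/
noncomputable def indCount {V : Type*} (G : SimpleGraph V) : ℕ :=
  Nat.card {S : Finset V // ∀ u ∈ S, ∀ v ∈ S, ¬ G.Adj u v}

/-- `i_k(G)`: the number of independent sets of `G` of size `k`. -/
noncomputable def indCountK {V : Type*} (G : SimpleGraph V) (k : ℕ) : ℕ :=
  Nat.card {S : Finset V // (∀ u ∈ S, ∀ v ∈ S, ¬ G.Adj u v) ∧ S.card = k}

/-- Two codes encode the same threshold graph: they have the same length and agree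
except possibly in the rightmost (starred) digit. -/
def CodeEquiv (σ τ : List Bool) : Prop := σ.length = τ.length ∧ σ.dropLast = τ.dropLast

/-- Words that are concatenations of copies of the letters `a = 01` and `b = 10`. -/
inductive IsABWord : List Bool → Prop
  | nil : IsABWord []
  | a {w : List Bool} : IsABWord w → IsABWord (false :: true :: w)
  | b {w : List Bool} : IsABWord w → IsABWord (true :: false :: w)

/-- `w` is a concatenation of `α` copies of the letter `a = 01` and `β` copies of the
letter `b = 10`, in some order. -/
def IsABWordWith (α β : ℕ) (w : List Bool) : Prop :=
  ∃ ls : List (List Bool), (∀ x ∈ ls, x = [false, true] ∨ x = [true, false]) ∧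
    ls.count [false, true] = α ∧ ls.count [true, false] = β ∧ w = ls.flatten

/-- A code is almost alternating if (possibly after reinterpreting the starred rightmost
digit) it is an initial constant block followed by a word in the letters `a = 01` and
`b = 10`, either using the rightmost digit as the final digit of the last letter
(unstarred case) or keeping the rightmost digit separate after the word (starred case). -/
def IsAlmostAltCode (σ : List Bool) : Prop :=
  ∃ τ : List Bool, CodeEquiv σ τ ∧
    ∃ (t : ℕ) (c : Bool) (w : List Bool), IsABWord w ∧
      (τ = List.replicate t c ++ w ∨ ∃ d : Bool, τ = List.replicate t c ++ w ++ [d])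

/-- A small almost alternating code: the initial block consists of `0`'s (or is empty). -/
def IsSmallAACode (σ : List Bool) : Prop :=
  ∃ τ : List Bool, CodeEquiv σ τ ∧
    ∃ (t : ℕ) (w : List Bool), IsABWord w ∧
      (τ = List.replicate t false ++ w ∨ ∃ d : Bool, τ = List.replicate t false ++ w ++ [d])

/-- A large almost alternating code: the initial block is a nonempty block of `1`'s. -/
def IsLargeAACode (σ : List Bool) : Prop :=
  ∃ τ : List Bool, CodeEquiv σ τ ∧
    ∃ (t : ℕ) (w : List Bool), 1 ≤ t ∧ IsABWord w ∧
      (τ = List.replicate t true ++ w ∨ ∃ d : Bool, τ = List.replicate t true ++ w ++ [d])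

/-- A code has a bracketed string if (possibly after reinterpreting the starred rightmost
digit) it contains a substring `1 0^j 1` or `0 1^j 0` with `j ≥ 3`. -/
def HasBracketedString (σ : List Bool) : Prop :=
  ∃ τ : List Bool, CodeEquiv σ τ ∧ ∃ (x y : List Bool) (j : ℕ), 3 ≤ j ∧
    (τ = x ++ [true] ++ List.replicate j false ++ [true] ++ y ∨
     τ = x ++ [false] ++ List.replicate j true ++ [false] ++ y)

/-- A code has a separation issue if it contains two pairs of repeated digits separated by
a substring of odd length, where the first pair is immediately preceded by the opposite
digit and the second pair is followed by at least one further digit. -/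
def HasSeparationIssue (σ : List Bool) : Prop :=
  ∃ (x m y : List Bool) (d c : Bool),
    Odd m.length ∧ y ≠ [] ∧ σ = x ++ [!d, d, d] ++ m ++ [c, c] ++ y

/-- The colex graph `C(n,e)`: the graph on `Fin n` whose edges are the first `e` pairs in
the colexicographic order.  The pair `{i, j}` with `i < j` has rank `j(j-1)/2 + i` in
this order. -/
def colexGraph (n e : ℕ) : SimpleGraph (Fin n) where
  Adj i j := i ≠ j ∧ max i.val j.val * (max i.val j.val - 1) / 2 + min i.val j.val < e
  symm := by
    constructor
    intro i j h
    refine ⟨h.1.symm, ?_⟩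
    rw [max_comm j.val i.val, min_comm j.val i.val]
    exact h.2
  loopless := by
    constructor
    intro i h
    exact h.1 rfl

/-- The lex graph `L(n,e)`: the graph on `Fin n` whose edges are the first `e` pairs in
the lexicographic order.  The pair `{i, j}` with `i < j` has rank
`i(n-1) - i(i-1)/2 + (j - i - 1)` in this order. -/
def lexGraph (n e : ℕ) : SimpleGraph (Fin n) where
  Adj i j := i ≠ j ∧
    min i.val j.val * (n - 1) - min i.val j.val * (min i.val j.val - 1) / 2
      + (max i.val j.val - min i.val j.val - 1) < e
  symm := by
    constructor
    intro i j h
    refine ⟨h.1.symm, ?_⟩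
    rw [max_comm j.val i.val, min_comm j.val i.val]
    exact h.2
  loopless := by
    constructor
    intro i h
    exact h.1 rfl

-- ===== arithmetic =====
lemma tri (k : ℕ) : (k+1).choose 2 = k.choose 2 + k := by
  simp [Nat.choose_succ_succ, Nat.choose_one_right, Nat.add_comm]

lemma rank_inj {M m M' m' : ℕ} (h1 : m < M) (h2 : m' < M')
    (h : M.choose 2 + m = M'.choose 2 + m') : M = M' ∧ m = m' := by
  rcases Nat.lt_trichotomy M M' with hlt | heq | hgt
  · have e1 := tri M
    have e2 : (M+1).choose 2 ≤ M'.choose 2 := Nat.choose_le_choose 2 hlt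
    omega
  · subst heq; omega
  · have e1 := tri M'
    have e2 : (M'+1).choose 2 ≤ M.choose 2 := Nat.choose_le_choose 2 hgt
    omega

lemma decompose_e {n e : ℕ} (h1 : 1 ≤ e) (h2 : e ≤ n.choose 2) :
    ∃ k r, 1 ≤ r ∧ r ≤ k ∧ k + 1 ≤ n ∧ e = k.choose 2 + r := by
  have hn : 2 ≤ n := by
    by_contra hn
    interval_cases n <;> simp_all
  have hP1 : (1:ℕ).choose 2 < e := by simp [Nat.choose]; omega
  set k := Nat.findGreatest (fun k => k.choose 2 < e) n with hk
  have hk1 : 1 ≤ k := Nat.le_findGreatest (m := 1) (by omega) hP1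
  have hkP : k.choose 2 < e :=
    Nat.findGreatest_spec (P := fun k => k.choose 2 < e) (m := 1) (by omega) hP1
  have hkn : k ≤ n := Nat.findGreatest_le n
  have hklt : k < n := by
    rcases Nat.lt_or_ge k n with h | h
    · exact h
    · exfalso
      have hkeq : k = n := le_antisymm hkn h
      rw [hkeq] at hkP; omega
  have hnot : ¬ (k+1).choose 2 < e :=
    Nat.findGreatest_is_greatest (P := fun k => k.choose 2 < e) (n := n) (by omega) (by omega)
  have := tri k
  exact ⟨k, e - k.choose 2, by omega, by omega, by omega, by omega⟩

-- ===== edge count of colex graph =====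
def colexRank {n : ℕ} : Sym2 (Fin n) → ℕ :=
  Sym2.lift ⟨fun i j => (max i.1 j.1).choose 2 + min i.1 j.1, by
    intro i j; dsimp only; rw [max_comm, min_comm]⟩

lemma colexRank_mk {n : ℕ} (i j : Fin n) :
    colexRank s(i,j) = (max i.1 j.1).choose 2 + min i.1 j.1 := rfl

lemma colexRank_lt {n e : ℕ} (z : Sym2 (Fin n)) (hz : z ∈ (colexGraph n e).edgeSet) :
    colexRank z < e := by
  induction z using Sym2.ind with
  | _ i j =>
    rw [SimpleGraph.mem_edgeSet] at hz
    rw [colexRank_mk, Nat.choose_two_right]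
    exact hz.2

lemma colexRank_inj {n e : ℕ} (z w : Sym2 (Fin n)) (hz : z ∈ (colexGraph n e).edgeSet)
    (hw : w ∈ (colexGraph n e).edgeSet) (h : colexRank z = colexRank w) : z = w := by
  induction z using Sym2.ind with
  | _ i j =>
  induction w using Sym2.ind with
  | _ i' j' =>
    rw [SimpleGraph.mem_edgeSet] at hz hw
    have hij : i.1 ≠ j.1 := fun hv => hz.1 (Fin.ext hv)
    have hij' : i'.1 ≠ j'.1 := fun hv => hw.1 (Fin.ext hv)
    rw [colexRank_mk, colexRank_mk] at h
    obtain ⟨hM, hm⟩ := rank_inj (min_lt_max.mpr hij) (min_lt_max.mpr hij') h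
    have hcase : (i.1 = i'.1 ∧ j.1 = j'.1) ∨ (i.1 = j'.1 ∧ j.1 = i'.1) := by omega
    rcases hcase with ⟨h1, h2⟩ | ⟨h1, h2⟩
    · rw [Sym2.eq_iff]; exact Or.inl ⟨Fin.ext h1, Fin.ext h2⟩
    · rw [Sym2.eq_iff]; exact Or.inr ⟨Fin.ext h1, Fin.ext h2⟩

lemma colex_edgeCount {n e : ℕ} (he : e ≤ n.choose 2) :
    edgeCount (colexGraph n e) = e := by
  have hf : ∀ z : (colexGraph n e).edgeSet, colexRank z.1 < e :=
    fun z => colexRank_lt z.1 z.2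
  set f : (colexGraph n e).edgeSet → Fin e := fun z => ⟨colexRank z.1, hf z⟩ with hfdef
  have hinj : Function.Injective f := by
    intro z w hzw
    apply Subtype.ext
    exact colexRank_inj z.1 w.1 z.2 w.2 (congrArg Fin.val hzw)
  have hsurj : Function.Surjective f := by
    intro t
    have ht : t.1 < e := t.2
    have hP0 : (0:ℕ).choose 2 ≤ t.1 := by simp
    set j := Nat.findGreatest (fun m => m.choose 2 ≤ t.1) n with hj
    have hjP : j.choose 2 ≤ t.1 := by
      rcases Nat.eq_zero_or_pos j with h0 | hpos
      · rw [h0]; simpa using hP0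
      · exact Nat.findGreatest_spec (P := fun m => m.choose 2 ≤ t.1) (m := 0) (by omega) hP0
    have hjn : j ≤ n := Nat.findGreatest_le n
    have hjlt : j < n := by
      rcases Nat.lt_or_ge j n with h | h
      · exact h
      · exfalso
        have hkeq : j = n := le_antisymm hjn h
        rw [hkeq] at hjP
        omega
    have hnot : ¬ (j+1).choose 2 ≤ t.1 :=
      Nat.findGreatest_is_greatest (P := fun m => m.choose 2 ≤ t.1) (n := n) (by omega) (by omega)
    have htri := tri j
    have hj1 : 1 ≤ j := by omega
    set i : ℕ := t.1 - j.choose 2 with hi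
    have hiltj : i < j := by omega
    refine ⟨⟨s(⟨i, by omega⟩, ⟨j, by omega⟩), ?_⟩, ?_⟩
    · rw [SimpleGraph.mem_edgeSet]
      refine ⟨fun hv => by have := congrArg Fin.val hv; simp only [] at this; omega, ?_⟩
      simp only []
      rw [max_eq_right (le_of_lt hiltj), min_eq_left (le_of_lt hiltj),
        ← Nat.choose_two_right]
      omega
    · apply Fin.ext
      show colexRank _ = t.1
      rw [colexRank_mk]
      simp only []
      rw [max_eq_right (le_of_lt hiltj), min_eq_left (le_of_lt hiltj)]
      omega
  unfold edgeCount
  rw [Nat.card_congr (Equiv.ofBijective f ⟨hinj, hsurj⟩)]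
  simp

lemma edgeCount_iso {V W : Type*} {G : SimpleGraph V} {H : SimpleGraph W} (φ : G ≃g H) :
    edgeCount G = edgeCount H := Nat.card_congr φ.mapEdgeSet

-- ===== canonical codes =====
/-- canonical good code: `0^s 1^a 0 1^b` -/
def codCode (s a b : ℕ) : List Bool :=
  List.replicate s false ++ (List.replicate a true ++ false :: List.replicate b true)

lemma codCode_length (s a b : ℕ) : (codCode s a b).length = s + a + 1 + b := by
  simp [codCode]; omega

lemma codCode_get (s a b : ℕ) (v : ℕ) (h : v < (codCode s a b).length) :
    ((codCode s a b).get ⟨v, h⟩ = true) ↔ (s ≤ v ∧ v < s + a ∨ s + a + 1 ≤ v) := by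
  have hlen := codCode_length s a b
  rw [List.get_eq_getElem]
  simp only [codCode]
  rcases Nat.lt_or_ge v s with h1 | h1
  · rw [List.getElem_append_left (by simpa using h1)]
    simp [h1]; omega
  · rw [List.getElem_append_right (by simpa using h1)]
    simp only [List.length_replicate]
    rcases Nat.lt_or_ge (v - s) a with h2 | h2
    · rw [List.getElem_append_left (by simpa using h2)]
      simp; omega
    · rw [List.getElem_append_right (by simpa using h2)]
      simp only [List.length_replicate]
      rcases Nat.eq_or_lt_of_le h2 with h3 | h3
      · have hz : v - s - a = 0 := by omega
        simp only [hz, List.getElem_cons_zero]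
        simp; omega
      · have hsplit : (false :: List.replicate b true) = [false] ++ List.replicate b true := rfl
        simp only [hsplit]
        rw [List.getElem_append_right (by simp; omega)]
        simp; omega

-- ===== adjacency characterizations =====
lemma colex_adj {n k r : ℕ} (hrk : r ≤ k) (hkn : k < n) (i j : Fin n) :
    (colexGraph n (k.choose 2 + r)).Adj i j ↔
      i ≠ j ∧ (max i.1 j.1 < k ∨ (max i.1 j.1 = k ∧ min i.1 j.1 < r)) := by
  show (i ≠ j ∧ _) ↔ _
  refine and_congr_right fun hne => ?_
  have hvne : i.1 ≠ j.1 := fun hv => hne (Fin.ext hv)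
  set M := max i.1 j.1 with hM
  set m := min i.1 j.1 with hm
  have hmM : m < M := min_lt_max.mpr hvne
  rw [← Nat.choose_two_right]
  rcases Nat.lt_trichotomy M k with hc | hc | hc
  · have e1 := tri M
    have e2 : (M+1).choose 2 ≤ k.choose 2 := Nat.choose_le_choose 2 hc
    constructor
    · intro _; exact Or.inl hc
    · intro _; omega
  · have hck : M.choose 2 = k.choose 2 := by rw [hc]
    constructor
    · intro h; exact Or.inr ⟨hc, by omega⟩
    · rintro (h | ⟨_, h⟩) <;> omega
  · have e1 := tri k
    have e2 : (k+1).choose 2 ≤ M.choose 2 := Nat.choose_le_choose 2 hc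
    constructor
    · intro h; omega
    · rintro (h | ⟨h, _⟩) <;> omega

lemma thresh_adj (σ : List Bool) (i j : Fin σ.length) :
    (threshOf σ).Adj i j ↔ i ≠ j ∧
      (σ.get ⟨min i.1 j.1, lt_of_le_of_lt (min_le_left _ _) i.2⟩ = true) := by
  show (_ ∧ σ.get (min i j) = true) ↔ _
  have hmin : min i j = ⟨min i.1 j.1, lt_of_le_of_lt (min_le_left _ _) i.2⟩ := rfl
  rw [hmin]

lemma thresh_cod_adj (s a b : ℕ) (i j : Fin (codCode s a b).length) :
    (threshOf (codCode s a b)).Adj i j ↔ i ≠ j ∧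
      (s ≤ min i.1 j.1 ∧ min i.1 j.1 < s + a ∨ s + a + 1 ≤ min i.1 j.1) := by
  rw [thresh_adj, codCode_get]


-- ===== the main isomorphism for canonical codes =====
lemma cod_iso (s a b : ℕ) (ha : 1 ≤ a) :
    Nonempty (threshOf (codCode s a b) ≃g
      colexGraph (codCode s a b).length ((a+b).choose 2 + a)) := by
  set n := (codCode s a b).length with hn
  have hlen : n = s + a + 1 + b := codCode_length s a b
  set φn : ℕ → ℕ := fun v =>
    if v < s then a + b + 1 + v else if v < s + a then v - s
      else if v = s + a then a + b else v - s - 1 with hφn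
  have hbound : ∀ v, v < n → φn v < n := by
    intro v hv
    simp only [hφn]
    split_ifs <;> omega
  have hinjn : ∀ v w, v < n → w < n → φn v = φn w → v = w := by
    intro v w hv hw h
    simp only [hφn] at h
    split_ifs at h <;> omega
  set φ : Fin n → Fin n := fun i => ⟨φn i.1, hbound i.1 i.2⟩ with hφ
  have hinj : Function.Injective φ := by
    intro i j h
    apply Fin.ext
    exact hinjn i.1 j.1 i.2 j.2 (congrArg Fin.val h)
  have hbij : Function.Bijective φ := (Finite.injective_iff_bijective).mp hinj
  refine ⟨⟨Equiv.ofBijective φ hbij, ?_⟩⟩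
  intro i j
  show (colexGraph n ((a+b).choose 2 + a)).Adj (φ i) (φ j) ↔ _
  rw [colex_adj (by omega) (by omega), thresh_cod_adj]
  constructor
  · rintro ⟨hne, hc⟩
    refine ⟨fun hij => hne (congrArg φ hij), ?_⟩
    have h1 : (φ i).1 = φn i.1 := rfl
    have h2 : (φ j).1 = φn j.1 := rfl
    rw [h1, h2] at hc
    have hi := i.2; have hj := j.2
    simp only [hφn] at hc
    split_ifs at hc <;> omega
  · rintro ⟨hne, hc⟩
    refine ⟨fun hij => hne (hinj hij), ?_⟩
    have hvne : i.1 ≠ j.1 := fun hv => hne (Fin.ext hv)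
    show max (φn i.1) (φn j.1) < a + b ∨ max (φn i.1) (φn j.1) = a + b ∧ min (φn i.1) (φn j.1) < a
    have hi := i.2; have hj := j.2
    simp only [hφn]
    split_ifs <;> omega

lemma cod_e_le (s a b : ℕ) : (a+b).choose 2 + a ≤ (codCode s a b).length.choose 2 := by
  have h1 := tri (a+b)
  have h2 : (a+b+1).choose 2 ≤ (codCode s a b).length.choose 2 :=
    Nat.choose_le_choose 2 (by rw [codCode_length]; omega)
  omega

lemma cod_edgeCount (s a b : ℕ) (ha : 1 ≤ a) :
    edgeCount (threshOf (codCode s a b)) = (a+b).choose 2 + a := by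
  obtain ⟨φ⟩ := cod_iso s a b ha
  rw [edgeCount_iso φ]
  exact colex_edgeCount (cod_e_le s a b)

-- ===== all-false code =====
lemma allfalse_no_adj (m : ℕ) (i j : Fin (List.replicate m false).length) :
    ¬ (threshOf (List.replicate m false)).Adj i j := by
  rintro ⟨hne, hget⟩
  rw [List.get_eq_getElem, List.getElem_replicate] at hget
  exact Bool.false_ne_true hget

lemma allfalse_edgeCount (m : ℕ) : edgeCount (threshOf (List.replicate m false)) = 0 := by
  unfold edgeCount
  rw [Nat.card_eq_zero]
  left
  rw [isEmpty_subtype]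
  intro z
  induction z using Sym2.ind with
  | _ i j =>
    rw [SimpleGraph.mem_edgeSet]
    exact allfalse_no_adj m i j

lemma allfalse_iso (m : ℕ) :
    Nonempty (threshOf (List.replicate m false) ≃g
      colexGraph (List.replicate m false).length 0) := by
  refine ⟨⟨Equiv.refl _, ?_⟩⟩
  intro i j
  constructor
  · rintro ⟨_, h⟩; exact absurd h (by omega)
  · intro h; exact absurd h (allfalse_no_adj m i j)

-- ===== cast isomorphisms =====
lemma thresh_cast {σ τ : List Bool} (h : CodeEquiv σ τ) :
    Nonempty (threshOf σ ≃g threshOf τ) := by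
  obtain ⟨hlen, hdl⟩ := h
  have key : ∀ v (h1 : v < σ.length) (h2 : v < τ.length), v < σ.length - 1 →
      σ.get ⟨v, h1⟩ = τ.get ⟨v, h2⟩ := by
    intro v h1 h2 hv
    rw [List.get_eq_getElem, List.get_eq_getElem,
      ← List.getElem_dropLast (xs := σ) (i := v) (by rw [List.length_dropLast]; omega),
      ← List.getElem_dropLast (xs := τ) (i := v) (by rw [List.length_dropLast]; omega)]
    exact List.getElem_of_eq hdl _
  refine ⟨⟨finCongr hlen, ?_⟩⟩
  intro i j
  rw [thresh_adj, thresh_adj]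
  constructor
  · rintro ⟨hne, hget⟩
    have hij : i ≠ j := fun he => hne (by rw [he])
    refine ⟨hij, ?_⟩
    have hvij : i.1 ≠ j.1 := fun hv => hij (Fin.ext hv)
    have hmlt : min i.1 j.1 < σ.length - 1 := by
      have := i.2; have := j.2; omega
    rw [key (min i.1 j.1) (lt_of_le_of_lt (min_le_left _ _) i.2)
      (by rw [← hlen]; exact lt_of_le_of_lt (min_le_left _ _) i.2) hmlt]
    exact hget
  · rintro ⟨hij, hget⟩
    refine ⟨fun he => hij ((finCongr hlen).injective he), ?_⟩
    have hvij : i.1 ≠ j.1 := fun hv => hij (Fin.ext hv)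
    have hmlt : min i.1 j.1 < σ.length - 1 := by
      have := i.2; have := j.2; omega
    have hres := (key (min i.1 j.1) (lt_of_le_of_lt (min_le_left _ _) i.2)
      (by rw [← hlen]; exact lt_of_le_of_lt (min_le_left _ _) i.2) hmlt) ▸ hget
    exact hres

lemma colex_cast {n n' e : ℕ} (h : n = n') :
    Nonempty (colexGraph n e ≃g colexGraph n' e) := by
  subst h
  exact ⟨⟨Equiv.refl _, Iff.rfl⟩⟩

-- ===== list normalization =====
def GoodShape (τ : List Bool) : Prop :=
  (∃ m, τ = List.replicate m false) ∨ (∃ s a b, 1 ≤ a ∧ τ = codCode s a b)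

lemma count_false_zero {l : List Bool} (h : l.count false = 0) :
    l = List.replicate l.length true := by
  rw [List.eq_replicate_iff]
  refine ⟨rfl, fun b hb => ?_⟩
  cases b
  · exact absurd h (by rw [List.count_eq_zero]; intro hc; exact hc hb)
  · rfl

lemma split_le_one_false {l : List Bool} (h : l.count false ≤ 1) :
    (∃ a, l = List.replicate a true) ∨
      (∃ a b, l = List.replicate a true ++ false :: List.replicate b true) := by
  induction l with
  | nil => exact Or.inl ⟨0, rfl⟩
  | cons x l ih =>
    cases x
    · have hc : l.count false = 0 := by
        rw [List.count_cons] at h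
        simp at h
        omega
      right
      exact ⟨0, l.length, by rw [← count_false_zero hc]; rfl⟩
    · have hc : l.count false ≤ 1 := by
        rw [List.count_cons] at h
        simp at h
        omega
      rcases ih hc with ⟨a, ha⟩ | ⟨a, b, hab⟩
      · exact Or.inl ⟨a+1, by rw [List.replicate_succ, ha]⟩
      · exact Or.inr ⟨a+1, b, by rw [List.replicate_succ, hab]; rfl⟩

lemma takeWhile_all_false (τ : List Bool) :
    τ.takeWhile (fun b => !b) = List.replicate (τ.takeWhile (fun b => !b)).length false := by
  rw [List.eq_replicate_iff]
  refine ⟨rfl, fun b hb => ?_⟩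
  have := List.mem_takeWhile_imp hb
  simpa using this

lemma norm_good {τ : List Bool} (h : (τ.dropWhile (fun b => !b)).count false ≤ 1) :
    ∃ τ' : List Bool, CodeEquiv τ τ' ∧ GoodShape τ' := by
  set s := (τ.takeWhile (fun b => !b)).length with hs
  set rest := τ.dropWhile (fun b => !b) with hrest
  have hdecomp : τ = List.replicate s false ++ rest := by
    conv_lhs => rw [← List.takeWhile_append_dropWhile (p := fun b => !b) (l := τ)]
    rw [← takeWhile_all_false]
  rcases split_le_one_false h with ⟨a, ha⟩ | ⟨a, b, hab⟩
  · -- rest is all true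
    cases a with
    | zero =>
      refine ⟨τ, ⟨rfl, rfl⟩, Or.inl ⟨s, ?_⟩⟩
      rw [hdecomp, ha]; simp
    | succ a' =>
      cases a' with
      | zero =>
        -- τ = 0^s ++ [true]
        refine ⟨List.replicate (s+1) false, ⟨?_, ?_⟩, Or.inl ⟨s+1, rfl⟩⟩
        · rw [hdecomp, ha]; simp
        · rw [hdecomp, ha, List.replicate_succ' (n := s) (a := false)]
          rw [show List.replicate 1 true = [true] from rfl]
          rw [List.dropLast_concat, List.dropLast_concat]
      | succ a'' =>
        -- τ = 0^s ++ 1^(a''+2): τ' = codCode s (a''+1) 0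
        refine ⟨codCode s (a''+1) 0, ⟨?_, ?_⟩, Or.inr ⟨s, a''+1, 0, by omega, rfl⟩⟩
        · rw [hdecomp, ha]; simp [codCode]
        · rw [hdecomp, ha, List.replicate_succ' (n := a''+1) (a := true)]
          rw [show codCode s (a''+1) 0
            = (List.replicate s false ++ List.replicate (a''+1) true) ++ [false] by
              simp [codCode]]
          rw [← List.append_assoc, List.dropLast_concat, List.dropLast_concat]
  · -- rest = 1^a ++ 0 :: 1^b
    have ha1 : 1 ≤ a := by
      rcases Nat.eq_zero_or_pos a with h0 | h1
      · exfalso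
        rw [h0] at hab
        have hne : rest ≠ [] := by rw [hab]; simp
        have hw : List.dropWhile (fun b => !b) τ ≠ [] := by rw [← hrest]; exact hne
        have hthis := List.head_dropWhile_not (fun b => !b) (l := τ) hw
        have hr2 : List.dropWhile (fun b => !b) τ = false :: List.replicate b true := by
          rw [← hrest, hab]; rfl
        simp only [hr2, List.head_cons] at hthis
        simp at hthis
      · exact h1
    refine ⟨τ, ⟨rfl, rfl⟩, Or.inr ⟨s, a, b, ha1, ?_⟩⟩
    rw [hdecomp, hab, codCode]

-- ===== uniqueness of threshold codes =====
lemma twin_swap_adj {V : Type*} [DecidableEq V] {G : SimpleGraph V} {u v : V}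
    (h : ∀ x, x ≠ u → x ≠ v → (G.Adj u x ↔ G.Adj v x)) :
    ∀ a b, G.Adj a b → G.Adj (Equiv.swap u v a) (Equiv.swap u v b) := by
  intro a b hab
  by_cases hau : a = u
  · rw [hau] at hab ⊢
    by_cases hbv : b = v
    · rw [hbv] at hab ⊢
      rw [Equiv.swap_apply_left, Equiv.swap_apply_right]
      exact hab.symm
    · by_cases hbu : b = u
      · exact absurd (hbu ▸ hab) (G.irrefl)
      · rw [Equiv.swap_apply_left, Equiv.swap_apply_of_ne_of_ne hbu hbv]
        exact (h b hbu hbv).mp hab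
  · by_cases hav : a = v
    · rw [hav] at hab ⊢
      by_cases hbu : b = u
      · rw [hbu] at hab ⊢
        rw [Equiv.swap_apply_right, Equiv.swap_apply_left]
        exact hab.symm
      · by_cases hbv : b = v
        · exact absurd (hbv ▸ hab) (G.irrefl)
        · rw [Equiv.swap_apply_right, Equiv.swap_apply_of_ne_of_ne hbu hbv]
          exact (h b hbu hbv).mpr hab
    · rw [Equiv.swap_apply_of_ne_of_ne hau hav]
      by_cases hbu : b = u
      · rw [hbu] at hab ⊢
        rw [Equiv.swap_apply_left]
        exact ((h a hau hav).mp hab.symm).symm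
      · by_cases hbv : b = v
        · rw [hbv] at hab ⊢
          rw [Equiv.swap_apply_right]
          exact ((h a hau hav).mpr hab.symm).symm
        · rw [Equiv.swap_apply_of_ne_of_ne hbu hbv]
          exact hab

def twinSwapIso {V : Type*} [DecidableEq V] (G : SimpleGraph V) (u v : V)
    (h : ∀ x, x ≠ u → x ≠ v → (G.Adj u x ↔ G.Adj v x)) : G ≃g G where
  toEquiv := Equiv.swap u v
  map_rel_iff' := by
    intro a b
    constructor
    · intro h'
      have := twin_swap_adj h _ _ h'
      simpa using this
    · exact twin_swap_adj h a b

lemma iso_universal {V W : Type*} {G : SimpleGraph V} {H : SimpleGraph W} (φ : G ≃g H)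
    (v : V) (hv : ∀ x, x ≠ v → G.Adj v x) : ∀ y, y ≠ φ v → H.Adj (φ v) y := by
  intro y hy
  have h1 : φ.symm y ≠ v := by
    intro he
    apply hy
    rw [← he, RelIso.apply_symm_apply]
  have h2 := hv (φ.symm y) h1
  have h3 : H.Adj (φ v) (φ (φ.symm y)) := φ.map_rel_iff.mpr h2
  rwa [RelIso.apply_symm_apply] at h3

lemma iso_isolated {V W : Type*} {G : SimpleGraph V} {H : SimpleGraph W} (φ : G ≃g H)
    (v : V) (hv : ∀ x, ¬ G.Adj v x) : ∀ y, ¬ H.Adj (φ v) y := by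
  intro y hy
  have h3 : H.Adj (φ v) (φ (φ.symm y)) := by rwa [RelIso.apply_symm_apply]
  exact hv _ (φ.map_rel_iff.mp h3)

lemma head_true_universal {σ : List Bool} (h2 : 2 ≤ σ.length)
    (h : σ.get ⟨0, by omega⟩ = true) :
    ∀ x, x ≠ (⟨0, by omega⟩ : Fin σ.length) → (threshOf σ).Adj ⟨0, by omega⟩ x := by
  intro x hx
  rw [thresh_adj]
  refine ⟨Ne.symm hx, ?_⟩
  have : (⟨min (0:ℕ) x.1, by omega⟩ : Fin σ.length) = ⟨0, by omega⟩ := Fin.ext (by simp)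
  rw [this]
  exact h

lemma head_false_isolated {σ : List Bool} (h2 : 1 ≤ σ.length)
    (h : σ.get ⟨0, by omega⟩ = false) :
    ∀ x, ¬ (threshOf σ).Adj (⟨0, by omega⟩ : Fin σ.length) x := by
  intro x hadj
  rw [thresh_adj] at hadj
  obtain ⟨hne, hget⟩ := hadj
  have : (⟨min (0:ℕ) x.1, by omega⟩ : Fin σ.length) = ⟨0, by omega⟩ := Fin.ext (by simp)
  rw [this, h] at hget
  exact Bool.false_ne_true hget

lemma adj_min_zero {σ : List Bool} {v x : Fin σ.length} (hadj : (threshOf σ).Adj v x)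
    (h : min v.1 x.1 = 0) (h0 : 0 < σ.length) : σ.get ⟨0, h0⟩ = true := by
  rw [thresh_adj] at hadj
  obtain ⟨_, hget⟩ := hadj
  rw [List.get_eq_getElem] at hget ⊢
  simp only [] at hget
  simp only [h] at hget
  exact hget

lemma exists_universal_iff {σ : List Bool} (h2 : 2 ≤ σ.length) :
    (∃ v : Fin σ.length, ∀ x, x ≠ v → (threshOf σ).Adj v x) ↔ σ.get ⟨0, by omega⟩ = true := by
  constructor
  · rintro ⟨v, hv⟩
    by_cases h0 : v.1 = 0
    · have hx : (⟨1, by omega⟩ : Fin σ.length) ≠ v := by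
        intro he
        have := congrArg Fin.val he
        simp only [] at this
        omega
      exact adj_min_zero (hv _ hx) (by simp only []; omega) (by omega)
    · have hx : (⟨0, by omega⟩ : Fin σ.length) ≠ v := by
        intro he
        have := congrArg Fin.val he
        simp only [] at this
        omega
      exact adj_min_zero (hv _ hx) (by simp only []; omega) (by omega)
  · intro h
    exact ⟨⟨0, by omega⟩, head_true_universal h2 h⟩

lemma exists_isolated_iff {σ : List Bool} (h2 : 2 ≤ σ.length) :
    (∃ v : Fin σ.length, ∀ x, ¬ (threshOf σ).Adj v x) ↔ σ.get ⟨0, by omega⟩ = false := by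
  constructor
  · rintro ⟨v, hv⟩
    cases hh : σ.get ⟨0, by omega⟩ with
    | false => rfl
    | true =>
      exfalso
      by_cases h0 : v = ⟨0, by omega⟩
      · exact hv ⟨1, by omega⟩ (h0 ▸ head_true_universal h2 hh ⟨1, by omega⟩
          (by intro he; have := congrArg Fin.val he; simp only [] at this; omega))
      · exact hv ⟨0, by omega⟩ ((head_true_universal h2 hh v h0).symm)
  · intro h
    exact ⟨⟨0, by omega⟩, head_false_isolated (by omega) h⟩

lemma tail_adj {c : Bool} {l : List Bool} (i j : Fin l.length) :
    (threshOf (c :: l)).Adj i.succ j.succ ↔ (threshOf l).Adj i j := by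
  rw [thresh_adj, thresh_adj]
  have hne : i.succ ≠ j.succ ↔ i ≠ j := by
    constructor
    · intro hn he; exact hn (by rw [he])
    · intro hn he; exact hn (Fin.succ_injective _ he)
  rw [hne]
  refine and_congr_right fun _ => ?_
  have hv : min (i.succ.1) (j.succ.1) = min i.1 j.1 + 1 := by
    simp only [Fin.val_succ]
    omega
  rw [List.get_eq_getElem, List.get_eq_getElem]
  simp only [hv]
  simp only [List.getElem_cons_succ]

lemma peel {c d : Bool} {l m : List Bool} (ψ : threshOf (c :: l) ≃g threshOf (d :: m))
    (h0 : ψ ⟨0, by simp⟩ = ⟨0, by simp⟩) : Nonempty (threshOf l ≃g threshOf m) := by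
  have hs0 : ψ.symm ⟨0, by simp⟩ = ⟨0, by simp⟩ := by
    rw [← h0, RelIso.symm_apply_apply]
  have hnz : ∀ i : Fin l.length, ψ i.succ ≠ ⟨0, by simp⟩ := by
    intro i he
    rw [← h0] at he
    have := ψ.injective he
    exact Fin.succ_ne_zero i (by exact this)
  have hnz' : ∀ j : Fin m.length, ψ.symm j.succ ≠ ⟨0, by simp⟩ := by
    intro j he
    rw [← hs0] at he
    have := ψ.symm.injective he
    exact Fin.succ_ne_zero j (by exact this)
  refine ⟨⟨⟨fun i => (ψ i.succ).pred (hnz i), fun j => (ψ.symm j.succ).pred (hnz' j),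
    ?_, ?_⟩, ?_⟩⟩
  · intro i
    apply Fin.succ_injective
    erw [Fin.succ_pred, Fin.succ_pred, RelIso.symm_apply_apply]
  · intro j
    apply Fin.succ_injective
    erw [Fin.succ_pred, Fin.succ_pred, RelIso.apply_symm_apply]
  · intro i j
    show (threshOf m).Adj ((ψ i.succ).pred (hnz i)) ((ψ j.succ).pred (hnz j)) ↔ _
    rw [← tail_adj (c := d)]; erw [Fin.succ_pred, Fin.succ_pred, ψ.map_rel_iff, tail_adj]

lemma thresh_unique : ∀ (σ τ : List Bool), σ.length = τ.length →
    Nonempty (threshOf σ ≃g threshOf τ) → σ.dropLast = τ.dropLast := by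
  intro σ
  induction σ with
  | nil =>
    intro τ h _
    rw [List.length_eq_zero_iff.mp h.symm]
  | cons c σ₁ ih =>
    intro τ hlen hiso
    cases τ with
    | nil => simp at hlen
    | cons d τ₁ =>
      cases σ₁ with
      | nil =>
        cases τ₁ with
        | nil => rfl
        | cons _ _ => simp at hlen
      | cons c₂ σ₂ =>
        cases τ₁ with
        | nil => simp at hlen
        | cons d₂ τ₂ =>
          obtain ⟨φ⟩ := hiso
          have h2 : 2 ≤ (c :: c₂ :: σ₂).length := by simp
          have h2' : 2 ≤ (d :: d₂ :: τ₂).length := by simp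
          have huniv : (∃ v, ∀ x, x ≠ v → (threshOf (c :: c₂ :: σ₂)).Adj v x) ↔
              (∃ w, ∀ y, y ≠ w → (threshOf (d :: d₂ :: τ₂)).Adj w y) := by
            constructor
            · rintro ⟨v, hv⟩; exact ⟨φ v, iso_universal φ v hv⟩
            · rintro ⟨w, hw⟩; exact ⟨φ.symm w, iso_universal φ.symm w hw⟩
          rw [exists_universal_iff h2, exists_universal_iff h2'] at huniv
          have hcd : c = d := by
            have : (c = true) ↔ (d = true) := huniv
            cases c <;> cases d <;> simp_all
          have hψ : ∃ ψ : threshOf (c :: c₂ :: σ₂) ≃g threshOf (d :: d₂ :: τ₂),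
              ψ ⟨0, by simp⟩ = ⟨0, by simp⟩ := by
            set u := φ.symm ⟨0, by simp⟩ with hu
            by_cases hc : c = true
            ·
              have hd : d = true := by rw [← hcd, hc]
              have hu0 : ∀ x, x ≠ (⟨0, by simp⟩ : Fin (c :: c₂ :: σ₂).length) →
                  (threshOf (c :: c₂ :: σ₂)).Adj ⟨0, by simp⟩ x :=
                head_true_universal h2 hc
              have hw0 : ∀ y, y ≠ (⟨0, by simp⟩ : Fin (d :: d₂ :: τ₂).length) →
                  (threshOf (d :: d₂ :: τ₂)).Adj ⟨0, by simp⟩ y :=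
                head_true_universal h2' hd
              have huu : ∀ x, x ≠ u → (threshOf (c :: c₂ :: σ₂)).Adj u x := by
                have := iso_universal φ.symm ⟨0, by simp⟩ hw0
                exact this
              have htwin : ∀ x, x ≠ (⟨0, by simp⟩ : Fin (c :: c₂ :: σ₂).length) → x ≠ u →
                  ((threshOf (c :: c₂ :: σ₂)).Adj ⟨0, by simp⟩ x ↔
                    (threshOf (c :: c₂ :: σ₂)).Adj u x) :=
                fun x hx1 hx2 => iff_of_true (hu0 x hx1) (huu x hx2)
              refine ⟨(twinSwapIso _ _ _ htwin).trans φ, ?_⟩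
              show φ ((Equiv.swap _ u) ⟨0, by simp⟩) = _
              rw [Equiv.swap_apply_left, hu, RelIso.apply_symm_apply]
            · rw [Bool.not_eq_true] at hc
              have hd : d = false := by rw [← hcd, hc]
              have hu0 : ∀ x, ¬ (threshOf (c :: c₂ :: σ₂)).Adj ⟨0, by simp⟩ x :=
                head_false_isolated (by omega) hc
              have hw0 : ∀ y, ¬ (threshOf (d :: d₂ :: τ₂)).Adj ⟨0, by simp⟩ y :=
                head_false_isolated (by omega) hd
              have huu : ∀ x, ¬ (threshOf (c :: c₂ :: σ₂)).Adj u x := by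
                have := iso_isolated φ.symm ⟨0, by simp⟩ hw0
                exact this
              have htwin : ∀ x, x ≠ (⟨0, by simp⟩ : Fin (c :: c₂ :: σ₂).length) → x ≠ u →
                  ((threshOf (c :: c₂ :: σ₂)).Adj ⟨0, by simp⟩ x ↔
                    (threshOf (c :: c₂ :: σ₂)).Adj u x) :=
                fun x _ _ => iff_of_false (hu0 x) (huu x)
              refine ⟨(twinSwapIso _ _ _ htwin).trans φ, ?_⟩
              show φ ((Equiv.swap _ u) ⟨0, by simp⟩) = _
              rw [Equiv.swap_apply_left, hu, RelIso.apply_symm_apply]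
          obtain ⟨ψ, hψ0⟩ := hψ
          have htails := ih (d₂ :: τ₂) (by simpa using hlen) (peel ψ hψ0)
          rw [List.dropLast_cons₂, List.dropLast_cons₂, hcd, htails]

-- ===== remaining helpers =====
lemma dropWhile_replicate_false (s : ℕ) (l : List Bool) :
    List.dropWhile (fun b => !b) (List.replicate s false ++ l)
      = List.dropWhile (fun b => !b) l := by
  induction s with
  | zero => simp
  | succ n ih => simpa using ih

lemma cod_count (s a b : ℕ) (ha : 1 ≤ a) :
    ((codCode s a b).dropWhile (fun b => !b)).count false ≤ 1 := by
  rw [codCode, dropWhile_replicate_false]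
  obtain ⟨a', rfl⟩ : ∃ a', a = a' + 1 := ⟨a - 1, by omega⟩
  rw [List.replicate_succ]
  rw [show (true :: List.replicate a' true) ++ false :: List.replicate b true
    = true :: (List.replicate a' true ++ false :: List.replicate b true) from rfl]
  rw [List.dropWhile_cons_of_neg (by simp)]
  simp [List.count_cons, List.count_append, List.count_replicate]

lemma edgeCount_le_choose {n : ℕ} (G : SimpleGraph (Fin n)) : edgeCount G ≤ n.choose 2 := by
  classical
  have h1 : edgeCount G = G.edgeFinset.card := by
    rw [edgeCount, Nat.card_eq_fintype_card, SimpleGraph.edgeFinset, Set.toFinset_card]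
  rw [h1]
  have := SimpleGraph.card_edgeFinset_le_card_choose_two (G := G)
  simpa using this


/-- A threshold graph `T(σ)` on `n` vertices with `e` edges is
isomorphic to the colex graph `C(n,e)` if and only if at most one `0` appears to the
right of the leftmost `1` in the code `σ` (where the rightmost digit may be
interpreted as either `0` or `1`). -/
theorem colex_iff_at_most_one_zero (σ : List Bool) :
    Nonempty (threshOf σ ≃g colexGraph σ.length (edgeCount (threshOf σ))) ↔
      ∃ τ : List Bool, CodeEquiv σ τ ∧
        (τ.dropWhile (fun b => !b)).count false ≤ 1 := by
  constructor
  · rintro ⟨φ⟩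
    by_cases he : edgeCount (threshOf σ) = 0
    · -- no edges
      have hnoadj : ∀ i j, ¬ (threshOf σ).Adj i j := by
        intro i j hadj
        rw [edgeCount, Nat.card_eq_zero] at he
        rcases he with hE | hInf
        · exact hE.elim' ⟨s(i,j), ((threshOf σ).mem_edgeSet).mpr hadj⟩
        · exact absurd hInf (not_infinite_iff_finite.mpr (Set.toFinite _).to_subtype)
      have hfalse : ∀ (i : ℕ) (hi : i < σ.length - 1), σ.get ⟨i, by omega⟩ = false := by
        intro i hi
        cases hgi : σ.get ⟨i, by omega⟩ with
        | false => rfl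
        | true =>
          exfalso
          apply hnoadj ⟨i, by omega⟩ ⟨σ.length - 1, by omega⟩
          rw [thresh_adj]
          refine ⟨by intro he'; have := congrArg Fin.val he'; simp only [] at this; omega, ?_⟩
          have hm : min i (σ.length - 1) = i := by omega
          rw [List.get_eq_getElem] at hgi ⊢
          simp only [hm]
          exact hgi
      refine ⟨σ, ⟨rfl, rfl⟩, ?_⟩
      have hdl : σ.dropLast = List.replicate (σ.length - 1) false := by
        rw [List.eq_replicate_iff]
        refine ⟨by simp, fun b hb => ?_⟩
        obtain ⟨i, hi, hgetb⟩ := List.mem_iff_getElem.mp hb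
        rw [List.getElem_dropLast] at hgetb
        have hlen' : i < σ.length - 1 := by simpa using hi
        rw [← hgetb]
        have hf := hfalse i hlen'
        rw [List.get_eq_getElem] at hf
        exact hf
      rcases Nat.eq_zero_or_pos σ.length with h0 | h1
      · rw [List.length_eq_zero_iff.mp h0]
        simp
      · have hne : σ ≠ [] := by
          intro h'
          rw [h'] at h1
          simp at h1
        conv_lhs => rw [← List.dropLast_append_getLast hne, hdl]
        rw [dropWhile_replicate_false]
        cases σ.getLast hne <;> simp
    · -- at least one edge
      have he1 : 1 ≤ edgeCount (threshOf σ) := Nat.one_le_iff_ne_zero.mpr he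
      have hele : edgeCount (threshOf σ) ≤ σ.length.choose 2 := edgeCount_le_choose _
      obtain ⟨k, r, hr1, hrk, hkn, hekr⟩ := decompose_e he1 hele
      have hlen_cod : (codCode (σ.length - 1 - k) r (k - r)).length = σ.length := by
        rw [codCode_length]
        omega
      have hre : (r + (k - r)).choose 2 + r = edgeCount (threshOf σ) := by
        rw [show r + (k - r) = k by omega]
        omega
      obtain ⟨ξ⟩ := cod_iso (σ.length - 1 - k) r (k - r) hr1
      rw [hre] at ξ
      obtain ⟨κ⟩ := colex_cast (e := edgeCount (threshOf σ)) hlen_cod.symm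
      have hcomp : Nonempty (threshOf σ ≃g threshOf (codCode (σ.length - 1 - k) r (k - r))) :=
        ⟨(φ.trans κ).trans ξ.symm⟩
      have huniq := thresh_unique σ _ hlen_cod.symm hcomp
      refine ⟨codCode (σ.length - 1 - k) r (k - r), ⟨hlen_cod.symm, huniq⟩, ?_⟩
      exact cod_count _ r (k - r) hr1
  · rintro ⟨τ, hct, hcount⟩
    obtain ⟨τ', hct', hshape⟩ := norm_good hcount
    have hce : CodeEquiv σ τ' := ⟨hct.1.trans hct'.1, hct.2.trans hct'.2⟩
    obtain ⟨ρ⟩ := thresh_cast hce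
    have hE : edgeCount (threshOf σ) = edgeCount (threshOf τ') := edgeCount_iso ρ
    have hiso' : Nonempty (threshOf τ' ≃g colexGraph τ'.length (edgeCount (threshOf τ'))) := by
      rcases hshape with ⟨m, hm⟩ | ⟨s, a, b, ha, hcod⟩
      · subst hm
        rw [allfalse_edgeCount]
        exact allfalse_iso m
      · subst hcod
        rw [cod_edgeCount s a b ha]
        exact cod_iso s a b ha
    obtain ⟨ξ⟩ := hiso'
    obtain ⟨κ⟩ := colex_cast (e := edgeCount (threshOf τ')) hce.1.symm
    rw [hE]
    exact ⟨(ρ.trans ξ).trans κ⟩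
end

section
/- Let σ and ρ be (possibly empty) binary strings and let j ≥ 2. Then the threshold graphs G = T(σ 1 0^j 1 ρ) and G' = T(σ 0 1 0^{j−2} 1 0 ρ) have the same number of vertices and edges, i(G) > i(G'), and i_k(G) ≥ i_k(G') for every k ≥ 0. -/
section CZISAux
open Finset

def Wf (c : List Bool) (b : Bool) (m : ℕ) : Finset (Fin c.length) :=
  Finset.univ.filter fun i => (i : ℕ) < m ∧ c.getD i false = b

def Zf (c : List Bool) (b : Bool) (m : ℕ) : ℕ := (Wf c b m).card

lemma getD_fin (c : List Bool) (i : Fin c.length) : c.getD i false = c.get i := by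
  rw [List.getD_eq_getElem _ _ i.isLt, List.get_eq_getElem]

lemma Zf_zero (c : List Bool) (b : Bool) : Zf c b 0 = 0 := by
  simp [Zf, Wf]

lemma Zf_step (c : List Bool) (b : Bool) (m : ℕ) (h : m < c.length) :
    Zf c b (m+1) = Zf c b m + (if c.getD m false = b then 1 else 0) := by
  classical
  by_cases hb : c.getD m false = b
  · rw [if_pos hb]
    have hins : Wf c b (m+1) = insert ⟨m, h⟩ (Wf c b m) := by
      ext i
      simp only [Wf, mem_filter, mem_univ, true_and, mem_insert]
      constructor
      · rintro ⟨hlt, hgb⟩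
        rcases Nat.lt_succ_iff_lt_or_eq.mp hlt with h' | h'
        · exact Or.inr ⟨h', hgb⟩
        · exact Or.inl (Fin.ext h')
      · rintro (rfl | ⟨hlt, hgb⟩)
        · exact ⟨Nat.lt_succ_self m, hb⟩
        · exact ⟨Nat.lt_succ_of_lt hlt, hgb⟩
    have hnm : (⟨m, h⟩ : Fin c.length) ∉ Wf c b m := by
      simp [Wf]
    rw [Zf, hins, card_insert_of_notMem hnm]
    rfl
  · rw [if_neg hb]
    have heq : Wf c b (m+1) = Wf c b m := by
      ext i
      simp only [Wf, mem_filter, mem_univ, true_and]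
      constructor
      · rintro ⟨hlt, hgb⟩
        rcases Nat.lt_succ_iff_lt_or_eq.mp hlt with h' | h'
        · exact ⟨h', hgb⟩
        · exfalso; apply hb; rw [← hgb]; congr 1; omega
      · rintro ⟨hlt, hgb⟩; exact ⟨Nat.lt_succ_of_lt hlt, hgb⟩
    rw [Zf, heq]
    rfl

lemma Zf_diff {c₁ c₂ : List Bool} (b : Bool) (d : ℕ) {a e : ℕ} (hae : a ≤ e)
    (he1 : e ≤ c₁.length) (he2 : e ≤ c₂.length)
    (hbase : Zf c₁ b a = Zf c₂ b a + d)
    (hagree : ∀ i, a ≤ i → i < e → c₁.getD i false = c₂.getD i false) :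
    Zf c₁ b e = Zf c₂ b e + d := by
  induction e, hae using Nat.le_induction with
  | base => exact hbase
  | succ k hk ih =>
    have h1 : k < c₁.length := by omega
    have h2 : k < c₂.length := by omega
    rw [Zf_step c₁ b k h1, Zf_step c₂ b k h2, hagree k hk (by omega),
        ih (by omega) (by omega) (fun i hi hik => hagree i hi (by omega))]
    omega

lemma Zf_run {c : List Bool} (b : Bool) {a e : ℕ} (hae : a ≤ e) (he : e ≤ c.length)
    (hdig : ∀ i, a ≤ i → i < e → c.getD i false = b) :
    Zf c b e = Zf c b a + (e - a) := by
  induction e, hae using Nat.le_induction with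
  | base => simp
  | succ k hk ih =>
    rw [Zf_step c b k (by omega), hdig k hk (by omega), if_pos rfl,
        ih (by omega) (fun i hi hik => hdig i hi (by omega))]
    omega

lemma Zf_const {c : List Bool} (b : Bool) {a e : ℕ} (hae : a ≤ e) (he : e ≤ c.length)
    (hdig : ∀ i, a ≤ i → i < e → c.getD i false ≠ b) :
    Zf c b e = Zf c b a := by
  induction e, hae using Nat.le_induction with
  | base => rfl
  | succ k hk ih =>
    rw [Zf_step c b k (by omega), if_neg (hdig k hk (by omega)),
        ih (by omega) (fun i hi hik => hdig i hi (by omega))]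
    omega

lemma indep_iff (c : List Bool) (S : Finset (Fin c.length)) :
    (∀ u ∈ S, ∀ v ∈ S, ¬ (threshOf c).Adj u v) ↔
      ∀ u ∈ S, ∀ v ∈ S, u < v → c.getD u false = false := by
  constructor
  · intro h u hu v hv huv
    by_contra hcon
    rw [Bool.not_eq_false] at hcon
    refine h u hu v hv ⟨Fin.ne_of_lt huv, ?_⟩
    rw [min_eq_left huv.le, ← getD_fin]
    exact hcon
  · rintro h u hu v hv ⟨hne, hmin⟩
    rcases lt_or_gt_of_ne hne with hlt | hgt
    · rw [min_eq_left hlt.le, ← getD_fin, h u hu v hv hlt] at hmin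
      exact Bool.false_ne_true hmin
    · rw [min_eq_right hgt.le, ← getD_fin, h v hv u hu hgt] at hmin
      exact Bool.false_ne_true hmin

lemma indCount_eq (c : List Bool) :
    indCount (threshOf c) = 1 + ∑ i ∈ Finset.range c.length, 2 ^ (Zf c false i) := by
  classical
  rw [indCount, Nat.card_eq_fintype_card, Fintype.card_subtype]
  have hdec : (Finset.univ.filter fun S : Finset (Fin c.length) =>
        ∀ u ∈ S, ∀ v ∈ S, ¬ (threshOf c).Adj u v)
      = insert ∅ (Finset.univ.biUnion fun m : Fin c.length =>
          (Wf c false m.1).powerset.image (insert m)) := by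
    ext S
    simp only [mem_filter, mem_univ, true_and, mem_insert, mem_biUnion, mem_image]
    rw [indep_iff]
    constructor
    · intro h
      rcases S.eq_empty_or_nonempty with rfl | hne
      · exact Or.inl rfl
      · refine Or.inr ⟨S.max' hne, S.erase (S.max' hne), mem_powerset.mpr ?_,
          insert_erase (S.max'_mem hne)⟩
        intro a ha
        have haS := mem_of_mem_erase ha
        have hlt : a < S.max' hne := lt_of_le_of_ne (S.le_max' a haS) (ne_of_mem_erase ha)
        simp only [Wf, mem_filter, mem_univ, true_and]
        exact ⟨hlt, h a haS _ (S.max'_mem hne) hlt⟩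
    · rintro (rfl | ⟨m, A, hA', rfl⟩)
      · intro u hu; exact absurd hu (notMem_empty u)
      · have hA : A ⊆ Wf c false (m : ℕ) := mem_powerset.mp hA'
        intro u hu v hv huv
        rcases mem_insert.mp hu with rfl | huA
        · rcases mem_insert.mp hv with rfl | hvA
          · exact absurd huv (lt_irrefl _)
          · have hvm : (v : ℕ) < (u : ℕ) := (mem_filter.mp (hA hvA)).2.1
            exact absurd huv (lt_asymm hvm)
        · exact (mem_filter.mp (hA huA)).2.2
  rw [hdec, card_insert_of_notMem, card_biUnion]
  · have hcard : ∀ m : Fin c.length,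
        ((Wf c false m.1).powerset.image (insert m)).card = 2 ^ Zf c false m.1 := by
      intro m
      have hinj : Set.InjOn (insert m) ((Wf c false m.1).powerset : Set (Finset (Fin c.length))) := by
        intro A hA B hB hAB
        have hA' : A ⊆ Wf c false m.1 := mem_powerset.mp (mem_coe.mp hA)
        have hB' : B ⊆ Wf c false m.1 := mem_powerset.mp (mem_coe.mp hB)
        have hmA : m ∉ A := fun hm => absurd ((mem_filter.mp (hA' hm)).2.1) (lt_irrefl _)
        have hmB : m ∉ B := fun hm => absurd ((mem_filter.mp (hB' hm)).2.1) (lt_irrefl _)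
        rw [← erase_insert hmA, hAB, erase_insert hmB]
      rw [card_image_of_injOn hinj, card_powerset]
      rfl
    rw [Finset.sum_congr rfl (fun m _ => hcard m),
      Fin.sum_univ_eq_sum_range (fun i => 2 ^ Zf c false i) c.length]
    omega
  · rintro m₁ - m₂ - hne
    rw [Function.onFun, disjoint_left]
    rintro S hS1 hS2
    simp only [mem_image, mem_powerset] at hS1 hS2
    obtain ⟨A, hA, rfl⟩ := hS1
    obtain ⟨B, hB, hSB⟩ := hS2
    have h1 : m₁ ∈ insert m₂ B := by rw [hSB]; exact mem_insert_self m₁ A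
    have h2 : m₂ ∈ insert m₁ A := by rw [← hSB]; exact mem_insert_self m₂ B
    rcases mem_insert.mp h1 with h | h
    · exact hne (Fin.ext (congrArg Fin.val h))
    · have hlt1 : (m₁ : ℕ) < (m₂ : ℕ) := (mem_filter.mp (hB h)).2.1
      rcases mem_insert.mp h2 with h' | h'
      · exact hne (Fin.ext (congrArg Fin.val h'.symm))
      · have hlt2 : (m₂ : ℕ) < (m₁ : ℕ) := (mem_filter.mp (hA h')).2.1
        omega
  · intro h
    simp only [mem_biUnion, mem_image] at h
    obtain ⟨m, -, A, -, hA⟩ := h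
    exact (insert_ne_empty m A) hA

lemma indCountK_zero (c : List Bool) : indCountK (threshOf c) 0 = 1 := by
  classical
  rw [indCountK, Nat.card_eq_fintype_card, Fintype.card_subtype]
  have : (Finset.univ.filter fun S : Finset (Fin c.length) =>
      (∀ u ∈ S, ∀ v ∈ S, ¬ (threshOf c).Adj u v) ∧ S.card = 0) = {∅} := by
    ext S
    simp only [mem_filter, mem_univ, true_and, mem_singleton, card_eq_zero]
    constructor
    · exact fun h => h.2
    · rintro rfl
      exact ⟨fun u hu => absurd hu (notMem_empty u), rfl⟩
  rw [this, card_singleton]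

lemma indCountK_eq (c : List Bool) (k : ℕ) :
    indCountK (threshOf c) (k+1)
      = ∑ i ∈ Finset.range c.length, (Zf c false i).choose k := by
  classical
  rw [indCountK, Nat.card_eq_fintype_card, Fintype.card_subtype]
  have hdec : (Finset.univ.filter fun S : Finset (Fin c.length) =>
        (∀ u ∈ S, ∀ v ∈ S, ¬ (threshOf c).Adj u v) ∧ S.card = k + 1)
      = Finset.univ.biUnion fun m : Fin c.length =>
          ((Wf c false m.1).powersetCard k).image (insert m) := by
    ext S
    simp only [mem_filter, mem_univ, true_and, mem_biUnion, mem_image]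
    rw [indep_iff]
    constructor
    · rintro ⟨h, hcardS⟩
      have hne : S.Nonempty := card_pos.mp (by omega)
      refine ⟨S.max' hne, S.erase (S.max' hne), mem_powersetCard.mpr ⟨?_, ?_⟩,
        insert_erase (S.max'_mem hne)⟩
      · intro a ha
        have haS := mem_of_mem_erase ha
        have hlt : a < S.max' hne := lt_of_le_of_ne (S.le_max' a haS) (ne_of_mem_erase ha)
        simp only [Wf, mem_filter, mem_univ, true_and]
        exact ⟨hlt, h a haS _ (S.max'_mem hne) hlt⟩
      · rw [card_erase_of_mem (S.max'_mem hne), hcardS]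
        omega
    · rintro ⟨m, A, hA', rfl⟩
      obtain ⟨hA, hcardA⟩ := mem_powersetCard.mp hA'
      have hmA : m ∉ A := fun hm => absurd ((mem_filter.mp (hA hm)).2.1) (lt_irrefl _)
      constructor
      · intro u hu v hv huv
        rcases mem_insert.mp hu with rfl | huA
        · rcases mem_insert.mp hv with rfl | hvA
          · exact absurd huv (lt_irrefl _)
          · have hvm : (v : ℕ) < (u : ℕ) := (mem_filter.mp (hA hvA)).2.1
            exact absurd huv (lt_asymm hvm)
        · exact (mem_filter.mp (hA huA)).2.2
      · rw [card_insert_of_notMem hmA, hcardA]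
  rw [hdec, card_biUnion]
  · have hcard : ∀ m : Fin c.length,
        (((Wf c false m.1).powersetCard k).image (insert m)).card
          = (Zf c false m.1).choose k := by
      intro m
      have hinj : Set.InjOn (insert m) (((Wf c false m.1).powersetCard k) : Set (Finset (Fin c.length))) := by
        intro A hA B hB hAB
        have hA' : A ⊆ Wf c false m.1 := (mem_powersetCard.mp (mem_coe.mp hA)).1
        have hB' : B ⊆ Wf c false m.1 := (mem_powersetCard.mp (mem_coe.mp hB)).1
        have hmA : m ∉ A := fun hm => absurd ((mem_filter.mp (hA' hm)).2.1) (lt_irrefl _)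
        have hmB : m ∉ B := fun hm => absurd ((mem_filter.mp (hB' hm)).2.1) (lt_irrefl _)
        rw [← erase_insert hmA, hAB, erase_insert hmB]
      rw [card_image_of_injOn hinj, card_powersetCard]
      rfl
    rw [Finset.sum_congr rfl (fun m _ => hcard m),
      Fin.sum_univ_eq_sum_range (fun i => (Zf c false i).choose k) c.length]
  · rintro m₁ - m₂ - hne
    rw [Function.onFun, disjoint_left]
    rintro S hS1 hS2
    simp only [mem_image, mem_powersetCard] at hS1 hS2
    obtain ⟨A, hA, rfl⟩ := hS1
    obtain ⟨B, hB, hSB⟩ := hS2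
    have h1 : m₁ ∈ insert m₂ B := by rw [hSB]; exact mem_insert_self m₁ A
    have h2 : m₂ ∈ insert m₁ A := by rw [← hSB]; exact mem_insert_self m₂ B
    rcases mem_insert.mp h1 with h | h
    · exact hne (Fin.ext (congrArg Fin.val h))
    · have hlt1 : (m₁ : ℕ) < (m₂ : ℕ) := (mem_filter.mp (hB.1 h)).2.1
      rcases mem_insert.mp h2 with h' | h'
      · exact hne (Fin.ext (congrArg Fin.val h'.symm))
      · have hlt2 : (m₂ : ℕ) < (m₁ : ℕ) := (mem_filter.mp (hA.1 h')).2.1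
        omega

lemma degree_eq (c : List Bool) [DecidableRel (threshOf c).Adj] (v : Fin c.length) :
    (threshOf c).degree v
      = (if c.getD v false = true then c.length - 1 - v.1 else 0) + Zf c true v.1 := by
  classical
  rw [show (threshOf c).degree v = ((threshOf c).neighborFinset v).card from rfl,
    SimpleGraph.neighborFinset_eq_filter]
  have hsplit : (univ.filter fun j => (threshOf c).Adj v j)
      = (univ.filter fun j : Fin c.length => v < j ∧ c.getD v false = true) ∪ Wf c true v.1 := by
    ext u
    simp only [mem_filter, mem_univ, true_and, mem_union, Wf]
    constructor
    · rintro ⟨hne, hmin⟩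
      rcases lt_or_gt_of_ne hne with hlt | hgt
      · left
        refine ⟨hlt, ?_⟩
        rwa [min_eq_left hlt.le, ← getD_fin] at hmin
      · right
        refine ⟨hgt, ?_⟩
        rwa [min_eq_right hgt.le, ← getD_fin] at hmin
    · rintro (⟨hlt, hgv⟩ | ⟨hlt, hgu⟩)
      · refine ⟨hlt.ne, ?_⟩
        rw [min_eq_left hlt.le, ← getD_fin]
        exact hgv
      · have hlt' : u < v := hlt
        refine ⟨hlt'.ne', ?_⟩
        rw [min_eq_right hlt'.le, ← getD_fin]
        exact hgu
  rw [hsplit, card_union_of_disjoint]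
  · congr 1
    by_cases hv : c.getD v false = true
    · rw [if_pos hv]
      have heq : (univ.filter fun j : Fin c.length => v < j ∧ c.getD v false = true)
          = univ.filter fun j => v < j := by
        ext u; simp only [mem_filter, mem_univ, true_and, hv, and_true]
      rw [heq, filter_lt_eq_Ioi, Fin.card_Ioi]
    · rw [if_neg hv]
      have heq : (univ.filter fun j : Fin c.length => v < j ∧ c.getD v false = true)
          = ∅ := by
        ext u
        simp only [mem_filter, mem_univ, true_and, notMem_empty, iff_false, not_and]
        intro _
        exact hv
      rw [heq, card_empty]
  · rw [disjoint_left]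
    intro u h1 h2
    have ha : v < u := (mem_filter.mp h1).2.1
    have hb : (u : ℕ) < (v : ℕ) := (mem_filter.mp h2).2.1
    have := Fin.lt_def.mp ha
    omega

lemma two_mul_edgeCount (c : List Bool) [DecidableRel (threshOf c).Adj] :
    2 * edgeCount (threshOf c)
      = ∑ i ∈ Finset.range c.length,
          ((if c.getD i false = true then c.length - 1 - i else 0) + Zf c true i) := by
  classical
  rw [edgeCount, Nat.card_eq_fintype_card, ← SimpleGraph.edgeFinset_card,
      ← SimpleGraph.sum_degrees_eq_twice_card_edges,
      Finset.sum_congr rfl (fun v (_ : v ∈ univ) => degree_eq c v),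
      Fin.sum_univ_eq_sum_range
        (fun i => (if c.getD i false = true then c.length - 1 - i else 0) + Zf c true i)
        c.length]

lemma pow_ineq (z0 j : ℕ) (hj : 2 ≤ j) : 2^(z0+j-1) + 2^(z0+1) < 2^(z0+j) + 2^z0 := by
  have h1 : 2^(z0+j) = 2 * 2^(z0+j-1) := by
    rw [← pow_succ']
    congr 1
    omega
  have h2 : 2^(z0+1) ≤ 2^(z0+j-1) := Nat.pow_le_pow_right (by norm_num) (by omega)
  have h3 : 0 < 2^z0 := Nat.pow_pos (by norm_num)
  omega

lemma choose_ineq (z0 j k : ℕ) (hj : 2 ≤ j) :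
    (z0+j-1).choose k + (z0+1).choose k ≤ (z0+j).choose k + z0.choose k := by
  cases k with
  | zero => simp
  | succ k' =>
    have h1 : (z0+j).choose (k'+1) = (z0+j-1).choose k' + (z0+j-1).choose (k'+1) := by
      have he : z0 + j = (z0+j-1) + 1 := by omega
      conv_lhs => rw [he]
      exact Nat.choose_succ_succ _ _
    have h2 : (z0+1).choose (k'+1) = z0.choose k' + z0.choose (k'+1) := Nat.choose_succ_succ _ _
    have h3 : z0.choose k' ≤ (z0+j-1).choose k' := Nat.choose_le_choose _ (by omega)
    omega

lemma get_c1 (σ ρ : List Bool) (j i : ℕ) :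
    (σ ++ [true] ++ List.replicate j false ++ [true] ++ ρ).getD i false =
      if i < σ.length then σ.getD i false
      else if i = σ.length then true
      else if i ≤ σ.length + j then false
      else if i = σ.length + j + 1 then true
      else ρ.getD (i - (σ.length + j + 2)) false := by
  simp only [List.append_assoc, List.singleton_append, List.cons_append, List.nil_append]
  by_cases h1 : i < σ.length
  · rw [if_pos h1, List.getD_append _ _ _ _ h1]
  · rw [if_neg h1, List.getD_append_right _ _ _ _ (by omega)]
    by_cases h2 : i = σ.length
    · rw [if_pos h2, show i - σ.length = 0 by omega, List.getD_cons_zero]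
    · rw [if_neg h2,
        show i - σ.length = (i - σ.length - 1) + 1 by omega, List.getD_cons_succ]
      by_cases h3 : i ≤ σ.length + j
      · rw [if_pos h3, List.getD_append _ _ _ _ (by rw [List.length_replicate]; omega),
          List.getD_eq_getElem _ _ (by rw [List.length_replicate]; omega), List.getElem_replicate]
      · rw [if_neg h3, List.getD_append_right _ _ _ _ (by rw [List.length_replicate]; omega),
          List.length_replicate]
        by_cases h4 : i = σ.length + j + 1
        · rw [if_pos h4, show i - σ.length - 1 - j = 0 by omega,
            List.getD_cons_zero]
        · rw [if_neg h4,
            show i - σ.length - 1 - j = (i - (σ.length + j + 2)) + 1 by omega,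
            List.getD_cons_succ]

lemma get_c2 (σ ρ : List Bool) (j i : ℕ) (hj : 2 ≤ j) :
    (σ ++ [false, true] ++ List.replicate (j - 2) false ++ [true, false] ++ ρ).getD i false =
      if i < σ.length then σ.getD i false
      else if i = σ.length then false
      else if i = σ.length + 1 then true
      else if i ≤ σ.length + j - 1 then false
      else if i = σ.length + j then true
      else if i = σ.length + j + 1 then false
      else ρ.getD (i - (σ.length + j + 2)) false := by
  simp only [List.append_assoc, List.singleton_append, List.cons_append, List.nil_append]
  by_cases h1 : i < σ.length
  · rw [if_pos h1, List.getD_append _ _ _ _ h1]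
  · rw [if_neg h1, List.getD_append_right _ _ _ _ (by omega)]
    by_cases h2 : i = σ.length
    · rw [if_pos h2, show i - σ.length = 0 by omega, List.getD_cons_zero]
    · rw [if_neg h2]
      by_cases h3 : i = σ.length + 1
      · rw [if_pos h3, show i - σ.length = 0 + 1 by omega, List.getD_cons_succ,
          List.getD_cons_zero]
      · rw [if_neg h3, show i - σ.length = ((i - σ.length - 2) + 1) + 1 by omega,
          List.getD_cons_succ, List.getD_cons_succ]
        by_cases h4 : i ≤ σ.length + j - 1
        · rw [if_pos h4, List.getD_append _ _ _ _ (by rw [List.length_replicate]; omega),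
            List.getD_eq_getElem _ _ (by rw [List.length_replicate]; omega),
            List.getElem_replicate]
        · rw [if_neg h4, List.getD_append_right _ _ _ _ (by rw [List.length_replicate]; omega),
            List.length_replicate]
          by_cases h5 : i = σ.length + j
          · rw [if_pos h5, show i - σ.length - 2 - (j - 2) = 0 by omega, List.getD_cons_zero]
          · rw [if_neg h5]
            by_cases h6 : i = σ.length + j + 1
            · rw [if_pos h6, show i - σ.length - 2 - (j - 2) = 0 + 1 by omega,
                List.getD_cons_succ, List.getD_cons_zero]
            · rw [if_neg h6, show i - σ.length - 2 - (j - 2) = ((i - (σ.length + j + 2)) + 1) + 1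
                by omega, List.getD_cons_succ, List.getD_cons_succ]

lemma sum_split {n : ℕ} (f g : ℕ → ℕ) (Q : Finset ℕ) (hQ : Q ⊆ Finset.range n)
    (hout : ∀ i ∈ Finset.range n, i ∉ Q → f i = g i) :
    ∑ i ∈ Finset.range n, f i = (∑ i ∈ Finset.range n \ Q, g i) + ∑ i ∈ Q, f i := by
  rw [← Finset.sum_sdiff hQ (f := f)]
  congr 1
  apply Finset.sum_congr rfl
  intro i hi
  exact hout i (Finset.mem_sdiff.mp hi).1 (Finset.mem_sdiff.mp hi).2

end CZISAux

/-- For binary strings `σ, ρ` and `j ≥ 2`, the threshold graphs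
`G = T(σ 1 0^j 1 ρ)` and `G' = T(σ 0 1 0^{j−2} 1 0 ρ)` have the same number of
vertices and edges, `i(G) > i(G')`, and `i_k(G) ≥ i_k(G')` for every `k`. -/
theorem consecutive_zeros_indep_sets (σ ρ : List Bool) (j : ℕ) (hj : 2 ≤ j) :
    (σ ++ [true] ++ List.replicate j false ++ [true] ++ ρ).length =
        (σ ++ [false, true] ++ List.replicate (j - 2) false ++ [true, false] ++ ρ).length ∧
      edgeCount (threshOf (σ ++ [true] ++ List.replicate j false ++ [true] ++ ρ)) =
        edgeCount (threshOf (σ ++ [false, true] ++ List.replicate (j - 2) false ++ [true, false] ++ ρ)) ∧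
      indCount (threshOf (σ ++ [false, true] ++ List.replicate (j - 2) false ++ [true, false] ++ ρ)) <
        indCount (threshOf (σ ++ [true] ++ List.replicate j false ++ [true] ++ ρ)) ∧
      ∀ k : ℕ,
        indCountK (threshOf (σ ++ [false, true] ++ List.replicate (j - 2) false ++ [true, false] ++ ρ)) k ≤
          indCountK (threshOf (σ ++ [true] ++ List.replicate j false ++ [true] ++ ρ)) k := by
  classical
  set c1 := σ ++ [true] ++ List.replicate j false ++ [true] ++ ρ with hc1
  set c2 := σ ++ [false, true] ++ List.replicate (j - 2) false ++ [true, false] ++ ρ with hc2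
  have hn1 : c1.length = σ.length + j + 2 + ρ.length := by
    rw [hc1]
    simp only [List.length_append, List.length_replicate, List.length_cons, List.length_nil]
    omega
  have hn2 : c2.length = σ.length + j + 2 + ρ.length := by
    rw [hc2]
    simp only [List.length_append, List.length_replicate, List.length_cons, List.length_nil]
    omega
  -- digit facts
  have d1 : ∀ i, i < σ.length → c1.getD i false = c2.getD i false := by
    intro i hi
    rw [hc1, hc2, get_c1, get_c2 σ ρ j i hj, if_pos hi, if_pos hi]
  have d2 : c1.getD σ.length false = true := by
    rw [hc1, get_c1, if_neg (lt_irrefl _), if_pos rfl]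
  have d3 : c2.getD σ.length false = false := by
    rw [hc2, get_c2 σ ρ j _ hj, if_neg (lt_irrefl _), if_pos rfl]
  have d4 : ∀ i, σ.length + 1 ≤ i → i ≤ σ.length + j → c1.getD i false = false := by
    intro i hi1 hi2
    rw [hc1, get_c1, if_neg (by omega), if_neg (by omega), if_pos hi2]
  have d5 : c2.getD (σ.length + 1) false = true := by
    rw [hc2, get_c2 σ ρ j _ hj, if_neg (by omega), if_neg (by omega), if_pos rfl]
  have d6 : ∀ i, σ.length + 2 ≤ i → i ≤ σ.length + j - 1 → c2.getD i false = false := by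
    intro i hi1 hi2
    rw [hc2, get_c2 σ ρ j _ hj, if_neg (by omega), if_neg (by omega), if_neg (by omega),
      if_pos hi2]
  have d7 : c2.getD (σ.length + j) false = true := by
    rw [hc2, get_c2 σ ρ j _ hj, if_neg (by omega), if_neg (by omega), if_neg (by omega),
      if_neg (by omega), if_pos rfl]
  have d8 : c1.getD (σ.length + j + 1) false = true := by
    rw [hc1, get_c1, if_neg (by omega), if_neg (by omega), if_neg (by omega), if_pos rfl]
  have d9 : c2.getD (σ.length + j + 1) false = false := by
    rw [hc2, get_c2 σ ρ j _ hj, if_neg (by omega), if_neg (by omega), if_neg (by omega),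
      if_neg (by omega), if_neg (by omega), if_pos rfl]
  have d10 : ∀ i, σ.length + j + 2 ≤ i → c1.getD i false = c2.getD i false := by
    intro i hi
    rw [hc1, hc2, get_c1, get_c2 σ ρ j i hj, if_neg (by omega), if_neg (by omega),
      if_neg (by omega), if_neg (by omega), if_neg (by omega), if_neg (by omega),
      if_neg (by omega), if_neg (by omega), if_neg (by omega), if_neg (by omega)]
  -- base equalities at σ.length
  have hZbase : ∀ b : Bool, Zf c1 b σ.length = Zf c2 b σ.length := by
    intro b
    have h := Zf_diff (c₁ := c1) (c₂ := c2) b 0 (Nat.zero_le σ.length) (by omega) (by omega)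
      (by rw [Zf_zero, Zf_zero]) (fun i _ hi => d1 i hi)
    omega
  have hzb := hZbase false
  have hyb := hZbase true
  -- Z (false) facts
  have z1s : Zf c1 false (σ.length + 1) = Zf c1 false σ.length := by
    have h := Zf_step c1 false σ.length (by omega)
    rw [d2] at h
    simpa using h
  have z1run : ∀ e, σ.length + 1 ≤ e → e ≤ σ.length + j + 1 →
      Zf c1 false e = Zf c1 false (σ.length + 1) + (e - (σ.length + 1)) := by
    intro e he1 he2
    exact Zf_run false he1 (by omega) (fun i hi1 hi2 => d4 i hi1 (by omega))
  have z1top : Zf c1 false (σ.length + j + 2) = Zf c1 false (σ.length + j + 1) := by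
    have h := Zf_step c1 false (σ.length + j + 1) (by omega)
    rw [d8, show σ.length + j + 1 + 1 = σ.length + j + 2 by omega] at h
    simpa using h
  have z2s : Zf c2 false (σ.length + 1) = Zf c2 false σ.length + 1 := by
    have h := Zf_step c2 false σ.length (by omega)
    rw [d3] at h
    simpa using h
  have z2s2 : Zf c2 false (σ.length + 2) = Zf c2 false (σ.length + 1) := by
    have h := Zf_step c2 false (σ.length + 1) (by omega)
    rw [d5, show σ.length + 1 + 1 = σ.length + 2 by omega] at h
    simpa using h
  have z2run : ∀ e, σ.length + 2 ≤ e → e ≤ σ.length + j →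
      Zf c2 false e = Zf c2 false (σ.length + 2) + (e - (σ.length + 2)) := by
    intro e he1 he2
    exact Zf_run false he1 (by omega) (fun i hi1 hi2 => d6 i hi1 (by omega))
  have z2t : Zf c2 false (σ.length + j + 1) = Zf c2 false (σ.length + j) := by
    have h := Zf_step c2 false (σ.length + j) (by omega)
    rw [d7] at h
    simpa using h
  have z2top : Zf c2 false (σ.length + j + 2) = Zf c2 false (σ.length + j + 1) + 1 := by
    have h := Zf_step c2 false (σ.length + j + 1) (by omega)
    rw [d9, show σ.length + j + 1 + 1 = σ.length + j + 2 by omega] at h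
    simpa using h
  have hz1pj : Zf c1 false (σ.length + j + 1) = Zf c1 false σ.length + j := by
    have h := z1run (σ.length + j + 1) (by omega) (by omega)
    omega
  have hz2mid := z2run (σ.length + j) (by omega) (le_refl _)
  have hz2p1 : Zf c2 false (σ.length + 1) = Zf c1 false σ.length + 1 := by omega
  have hz2pj : Zf c2 false (σ.length + j + 1) = Zf c1 false σ.length + j - 1 := by omega
  have hz1p1 : Zf c1 false (σ.length + 1) = Zf c1 false σ.length := z1s
  have hztop : Zf c1 false (σ.length + j + 2) = Zf c2 false (σ.length + j + 2) := by omega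
  have hZeq : ∀ e, e ≤ c1.length → e ≠ σ.length + 1 → e ≠ σ.length + j + 1 →
      Zf c1 false e = Zf c2 false e := by
    intro e he hne1 hne2
    rcases Nat.lt_or_ge e (σ.length + 1) with h | h
    · have hd := Zf_diff (c₁ := c1) (c₂ := c2) false 0 (Nat.zero_le e) (by omega) (by omega)
        (by rw [Zf_zero, Zf_zero]) (fun i _ hi => d1 i (by omega))
      omega
    · rcases Nat.lt_or_ge e (σ.length + j + 2) with h2 | h2
      · have ha := z1run e (by omega) (by omega)
        have hb := z2run e (by omega) (by omega)
        omega
      · have hd := Zf_diff (c₁ := c1) (c₂ := c2) false 0 h2 (by omega) (by omega)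
          (by omega) (fun i hi _ => d10 i hi)
        omega
  -- Y (true) facts
  have y1s : Zf c1 true (σ.length + 1) = Zf c1 true σ.length + 1 := by
    have h := Zf_step c1 true σ.length (by omega)
    rw [d2] at h
    simpa using h
  have y1run : ∀ e, σ.length + 1 ≤ e → e ≤ σ.length + j + 1 →
      Zf c1 true e = Zf c1 true (σ.length + 1) := by
    intro e he1 he2
    exact Zf_const true he1 (by omega)
      (fun i hi1 hi2 => by rw [d4 i hi1 (by omega)]; exact Bool.false_ne_true)
  have y1top : Zf c1 true (σ.length + j + 2) = Zf c1 true (σ.length + j + 1) + 1 := by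
    have h := Zf_step c1 true (σ.length + j + 1) (by omega)
    rw [d8, show σ.length + j + 1 + 1 = σ.length + j + 2 by omega] at h
    simpa using h
  have y2s : Zf c2 true (σ.length + 1) = Zf c2 true σ.length := by
    have h := Zf_step c2 true σ.length (by omega)
    rw [d3] at h
    simpa using h
  have y2s2 : Zf c2 true (σ.length + 2) = Zf c2 true (σ.length + 1) + 1 := by
    have h := Zf_step c2 true (σ.length + 1) (by omega)
    rw [d5, show σ.length + 1 + 1 = σ.length + 2 by omega] at h
    simpa using h
  have y2run : ∀ e, σ.length + 2 ≤ e → e ≤ σ.length + j →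
      Zf c2 true e = Zf c2 true (σ.length + 2) := by
    intro e he1 he2
    exact Zf_const true he1 (by omega)
      (fun i hi1 hi2 => by rw [d6 i hi1 (by omega)]; exact Bool.false_ne_true)
  have y2t : Zf c2 true (σ.length + j + 1) = Zf c2 true (σ.length + j) + 1 := by
    have h := Zf_step c2 true (σ.length + j) (by omega)
    rw [d7] at h
    simpa using h
  have y2top : Zf c2 true (σ.length + j + 2) = Zf c2 true (σ.length + j + 1) := by
    have h := Zf_step c2 true (σ.length + j + 1) (by omega)
    rw [d9, show σ.length + j + 1 + 1 = σ.length + j + 2 by omega] at h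
    simpa using h
  have hy1j := y1run (σ.length + j + 1) (by omega) (by omega)
  have hy1mid := y1run (σ.length + j) (by omega) (by omega)
  have hy2mid := y2run (σ.length + j) (by omega) (le_refl _)
  have hytop : Zf c1 true (σ.length + j + 2) = Zf c2 true (σ.length + j + 2) := by omega
  have hYeq : ∀ e, e ≤ c1.length → e ≠ σ.length + 1 → e ≠ σ.length + j + 1 →
      Zf c1 true e = Zf c2 true e := by
    intro e he hne1 hne2
    rcases Nat.lt_or_ge e (σ.length + 1) with h | h
    · have hd := Zf_diff (c₁ := c1) (c₂ := c2) true 0 (Nat.zero_le e) (by omega) (by omega)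
        (by rw [Zf_zero, Zf_zero]) (fun i _ hi => d1 i (by omega))
      omega
    · rcases Nat.lt_or_ge e (σ.length + j + 2) with h2 | h2
      · have ha := y1run e (by omega) (by omega)
        have hb := y2run e (by omega) (by omega)
        omega
      · have hd := Zf_diff (c₁ := c1) (c₂ := c2) true 0 h2 (by omega) (by omega)
          (by omega) (fun i hi _ => d10 i hi)
        omega
  -- the two-element exceptional set
  have hQ2 : ({σ.length + 1, σ.length + j + 1} : Finset ℕ) ⊆
      Finset.range (σ.length + j + 2 + ρ.length) := by
    intro i hi
    simp only [Finset.mem_insert, Finset.mem_singleton] at hi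
    rw [Finset.mem_range]
    omega
  have hQ2ne : (σ.length + 1) ∉ ({σ.length + j + 1} : Finset ℕ) := by
    simp only [Finset.mem_singleton]
    omega
  refine ⟨by omega, ?_, ?_, ?_⟩
  · -- edge counts
    have E1 := two_mul_edgeCount c1
    have E2 := two_mul_edgeCount c2
    conv at E1 => rhs; rw [hn1]
    conv at E2 => rhs; rw [hn2]
    have hQ4 : ({σ.length, σ.length + 1, σ.length + j, σ.length + j + 1} : Finset ℕ) ⊆
        Finset.range (σ.length + j + 2 + ρ.length) := by
      intro i hi
      simp only [Finset.mem_insert, Finset.mem_singleton] at hi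
      rw [Finset.mem_range]
      omega
    have hout : ∀ i ∈ Finset.range (σ.length + j + 2 + ρ.length),
        i ∉ ({σ.length, σ.length + 1, σ.length + j, σ.length + j + 1} : Finset ℕ) →
        ((if c1.getD i false = true then σ.length + j + 2 + ρ.length - 1 - i else 0)
            + Zf c1 true i)
          = ((if c2.getD i false = true then σ.length + j + 2 + ρ.length - 1 - i else 0)
            + Zf c2 true i) := by
      intro i hi hq
      simp only [Finset.mem_insert, Finset.mem_singleton] at hq
      push_neg at hq
      obtain ⟨q1, q2, q3, q4⟩ := hq
      rw [Finset.mem_range] at hi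
      have hd : c1.getD i false = c2.getD i false := by
        rcases Nat.lt_or_ge i σ.length with h | h
        · exact d1 i h
        · rcases le_or_gt i (σ.length + j) with h2 | h2
          · rw [d4 i (by omega) (by omega), d6 i (by omega) (by omega)]
          · exact d10 i (by omega)
      rw [hd, hYeq i (by omega) q2 q4]
    have key : (∑ i ∈ Finset.range (σ.length + j + 2 + ρ.length),
          ((if c1.getD i false = true then σ.length + j + 2 + ρ.length - 1 - i else 0)
            + Zf c1 true i))
        = ∑ i ∈ Finset.range (σ.length + j + 2 + ρ.length),
          ((if c2.getD i false = true then σ.length + j + 2 + ρ.length - 1 - i else 0)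
            + Zf c2 true i) := by
      rw [sum_split _ _ _ hQ4 hout,
        ← Finset.sum_sdiff hQ4 (f := fun i =>
          (if c2.getD i false = true then σ.length + j + 2 + ρ.length - 1 - i else 0)
            + Zf c2 true i)]
      congr 1
      rw [Finset.sum_insert (by simp only [Finset.mem_insert, Finset.mem_singleton]; omega),
        Finset.sum_insert (by simp only [Finset.mem_insert, Finset.mem_singleton]; omega),
        Finset.sum_insert (by simp only [Finset.mem_singleton]; omega),
        Finset.sum_singleton,
        Finset.sum_insert (by simp only [Finset.mem_insert, Finset.mem_singleton]; omega),
        Finset.sum_insert (by simp only [Finset.mem_insert, Finset.mem_singleton]; omega),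
        Finset.sum_insert (by simp only [Finset.mem_singleton]; omega),
        Finset.sum_singleton, d2, d3, d5, d7, d8, d9,
        d4 (σ.length + 1) (by omega) (by omega), d4 (σ.length + j) (by omega) (by omega)]
      simp only [if_true, if_false, Bool.false_eq_true, if_pos rfl]
      omega
    omega
  · -- indCount
    rw [indCount_eq c1, indCount_eq c2, hn1, hn2]
    have hout2 : ∀ i ∈ Finset.range (σ.length + j + 2 + ρ.length),
        i ∉ ({σ.length + 1, σ.length + j + 1} : Finset ℕ) →
        2 ^ Zf c2 false i = 2 ^ Zf c1 false i := by
      intro i hi hq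
      simp only [Finset.mem_insert, Finset.mem_singleton] at hq
      push_neg at hq
      rw [Finset.mem_range] at hi
      rw [hZeq i (by omega) hq.1 hq.2]
    rw [sum_split _ _ _ hQ2 hout2,
      ← Finset.sum_sdiff hQ2 (f := fun i => 2 ^ Zf c1 false i)]
    apply Nat.add_lt_add_left
    apply Nat.add_lt_add_left
    rw [Finset.sum_insert hQ2ne, Finset.sum_singleton,
      Finset.sum_insert hQ2ne, Finset.sum_singleton,
      hz2p1, hz2pj, hz1p1, hz1pj]
    have := pow_ineq (Zf c1 false σ.length) j hj
    omega
  · -- indCountK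
    intro k
    cases k with
    | zero =>
      rw [indCountK_zero, indCountK_zero]
    | succ k =>
      rw [indCountK_eq c1 k, indCountK_eq c2 k, hn1, hn2]
      have hout3 : ∀ i ∈ Finset.range (σ.length + j + 2 + ρ.length),
          i ∉ ({σ.length + 1, σ.length + j + 1} : Finset ℕ) →
          (Zf c2 false i).choose k = (Zf c1 false i).choose k := by
        intro i hi hq
        simp only [Finset.mem_insert, Finset.mem_singleton] at hq
        push_neg at hq
        rw [Finset.mem_range] at hi
        rw [hZeq i (by omega) hq.1 hq.2]
      rw [sum_split _ _ _ hQ2 hout3,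
        ← Finset.sum_sdiff hQ2 (f := fun i => (Zf c1 false i).choose k)]
      apply Nat.add_le_add_left
      rw [Finset.sum_insert hQ2ne, Finset.sum_singleton,
        Finset.sum_insert hQ2ne, Finset.sum_singleton,
        hz2p1, hz2pj, hz1p1, hz1pj]
      have := choose_ineq (Zf c1 false σ.length) j k hj
      omega
end
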